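/- Let n = 3^s·t where s ≥ 1, t > 1 and 3 ∤ t. Let x ∈ [3n−1] with x ≥ t, and suppose that x_i ≠ 2 for every i ∈ {0, ..., s}. Then x lies in the H-orbit of 0. -/

import Mathlib

lemma shuffleAux.div_lt (k n : ℕ) (x : Fin (k * n)) : (x : ℕ) / n < k := by
  have hx := x.isLt
  have hn : 0 < n := by
    rcases Nat.eq_zero_or_pos n with rfl | h
    · simp at hx
    · exact h
  exact (Nat.div_lt_iff_lt_mul hn).mpr hx

lemma shuffleAux.mod_lt (k n : ℕ) (x : Fin (k * n)) : (x : ℕ) % n < n := by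
  have hx := x.isLt
  have hn : 0 < n := by
    rcases Nat.eq_zero_or_pos n with rfl | h
    · simp at hx
    · exact h
  exact Nat.mod_lt _ hn

lemma shuffleAux.bound1 (k n : ℕ) (x : Fin (k * n)) :
    k * ((x : ℕ) % n) + (x : ℕ) / n < k * n := by
  have h1 := shuffleAux.mod_lt k n x
  have h2 := shuffleAux.div_lt k n x
  calc k * ((x : ℕ) % n) + (x : ℕ) / n
      < k * ((x : ℕ) % n) + k := by omega
    _ = k * ((x : ℕ) % n + 1) := by ring
    _ ≤ k * n := Nat.mul_le_mul_left _ (by omega)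

lemma shuffleAux.bound2 (k n : ℕ) (x : Fin (k * n)) (j : Fin k) :
    (x : ℕ) % n + (j : ℕ) * n < k * n := by
  have h1 := shuffleAux.mod_lt k n x
  have h2 := j.isLt
  calc (x : ℕ) % n + (j : ℕ) * n
      < n + (j : ℕ) * n := by omega
    _ = ((j : ℕ) + 1) * n := by ring
    _ ≤ k * n := Nat.mul_le_mul_right _ (by omega)

/-- The standard shuffle `σ` on a deck of `k * n` cards, where the card in position
`i + j·n` (`i ∈ [n]`, `j ∈ [k]`) is sent to position `k·i + j`; equivalently
`σ(x) = k·(x mod n) + ⌊x / n⌋`. -/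
noncomputable def stdShuffle (k n : ℕ) : Equiv.Perm (Fin (k * n)) :=
  Equiv.ofBijective
    (fun x => ⟨k * ((x : ℕ) % n) + (x : ℕ) / n, shuffleAux.bound1 k n x⟩)
    (Finite.injective_iff_bijective.mp (by
      intro x y hxy
      simp only [Fin.mk.injEq] at hxy
      have hk : 0 < k := lt_of_le_of_lt (Nat.zero_le _) (shuffleAux.div_lt k n x)
      have key : ∀ z : Fin (k * n),
          (k * ((z : ℕ) % n) + (z : ℕ) / n) % k = (z : ℕ) / n ∧
          (k * ((z : ℕ) % n) + (z : ℕ) / n) / k = (z : ℕ) % n := by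
        intro z
        have hz := shuffleAux.div_lt k n z
        constructor
        · rw [Nat.mul_add_mod, Nat.mod_eq_of_lt hz]
        · rw [Nat.mul_add_div hk, Nat.div_eq_of_lt hz, Nat.add_zero]
      obtain ⟨h1x, h2x⟩ := key x
      obtain ⟨h1y, h2y⟩ := key y
      rw [hxy] at h1x h2x
      have hd : (x : ℕ) / n = (y : ℕ) / n := by omega
      have hm : (x : ℕ) % n = (y : ℕ) % n := by omega
      apply Fin.ext
      rw [← Nat.div_add_mod (x : ℕ) n, ← Nat.div_add_mod (y : ℕ) n, hd, hm]))

/-- The permutation `ρ_τ` induced by a permutation `τ` of the `k` piles: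
`ρ_τ(i + j·n) = i + τ(j)·n` for `i ∈ [n]`, `j ∈ [k]`. -/
noncomputable def pilePerm (k n : ℕ) (τ : Equiv.Perm (Fin k)) : Equiv.Perm (Fin (k * n)) :=
  Equiv.ofBijective
    (fun x => ⟨(x : ℕ) % n + ((τ ⟨(x : ℕ) / n, shuffleAux.div_lt k n x⟩ : Fin k) : ℕ) * n,
      shuffleAux.bound2 k n x _⟩)
    (Finite.injective_iff_bijective.mp (by
      intro x y hxy
      simp only [Fin.mk.injEq] at hxy
      have hn : 0 < n := lt_of_le_of_lt (Nat.zero_le _) (shuffleAux.mod_lt k n x)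
      have key : ∀ z : Fin (k * n),
          ((z : ℕ) % n + ((τ ⟨(z : ℕ) / n, shuffleAux.div_lt k n z⟩ : Fin k) : ℕ) * n) % n
            = (z : ℕ) % n ∧
          ((z : ℕ) % n + ((τ ⟨(z : ℕ) / n, shuffleAux.div_lt k n z⟩ : Fin k) : ℕ) * n) / n
            = ((τ ⟨(z : ℕ) / n, shuffleAux.div_lt k n z⟩ : Fin k) : ℕ) := by
        intro z
        have h1 := shuffleAux.mod_lt k n z
        constructor
        · rw [Nat.add_mul_mod_self_right, Nat.mod_eq_of_lt h1]
        · rw [Nat.add_mul_div_right _ _ hn, Nat.div_eq_of_lt h1, Nat.zero_add]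
      obtain ⟨h1x, h2x⟩ := key x
      obtain ⟨h1y, h2y⟩ := key y
      rw [hxy] at h1x h2x
      have hm : (x : ℕ) % n = (y : ℕ) % n := by omega
      have hv : ((τ ⟨(x : ℕ) / n, shuffleAux.div_lt k n x⟩ : Fin k) : ℕ)
          = ((τ ⟨(y : ℕ) / n, shuffleAux.div_lt k n y⟩ : Fin k) : ℕ) := by omega
      have hτ : (⟨(x : ℕ) / n, shuffleAux.div_lt k n x⟩ : Fin k)
          = ⟨(y : ℕ) / n, shuffleAux.div_lt k n y⟩ := τ.injective (Fin.ext hv)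
      have hd : (x : ℕ) / n = (y : ℕ) / n := congrArg Fin.val hτ
      apply Fin.ext
      rw [← Nat.div_add_mod (x : ℕ) n, ← Nat.div_add_mod (y : ℕ) n, hd, hm]))

/-- The shuffle group `G_{k,kn}`, generated by the standard shuffle `σ` together with
the pile permutations `ρ_τ` for all `τ ∈ Sym([k])`. -/
noncomputable def shuffleGroup (k n : ℕ) : Subgroup (Equiv.Perm (Fin (k * n))) :=
  Subgroup.closure ({stdShuffle k n} ∪ Set.range (pilePerm k n))

/-- For `k = 3`, the subgroup `H = ⟨σ, ρ_{(01)}⟩` of `Sym([3n])`, where `(01)` is the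
transposition of `Sym([3])` swapping `0` and `1`. -/
noncomputable def shuffleH (n : ℕ) : Subgroup (Equiv.Perm (Fin (3 * n))) :=
  Subgroup.closure {stdShuffle 3 n, pilePerm 3 n (Equiv.swap 0 1)}

/-- For `x ∈ [3n]` with `n = 3^s·t`, the `i`-th base-3 digit `x_i` of `⌊x/t⌋`. -/
def digit (t x i : ℕ) : ℕ := (x / t / 3 ^ i) % 3

lemma digit_lt (t x i : ℕ) : digit t x i < 3 := Nat.mod_lt _ (by omega)

/-- `T(x) = |{i ∈ {0,...,s} : x_i = 2}|`, the number of base-3 digits of `⌊x/t⌋`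
(among positions `0,...,s`) equal to `2`. -/
def twoCount (s t x : ℕ) : ℕ :=
  ((Finset.range (s + 1)).filter (fun i => digit t x i = 2)).card

/-! ### Auxiliary development for `step_two` -/

/-- Membership of a value in the `H`-orbit of `0`, at the level of natural numbers. -/
def OrbN (n v : ℕ) : Prop :=
  ∃ (h0 : 0 < 3 * n) (hv : v < 3 * n), ∃ g ∈ shuffleH n, g ⟨0, h0⟩ = ⟨v, hv⟩

lemma stdShuffle_mem (n : ℕ) : stdShuffle 3 n ∈ shuffleH n :=
  Subgroup.subset_closure (Set.mem_insert _ _)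

lemma pilePerm_mem (n : ℕ) : pilePerm 3 n (Equiv.swap 0 1) ∈ shuffleH n :=
  Subgroup.subset_closure (Set.mem_insert_of_mem _ rfl)

lemma orb_zero (n : ℕ) (hn : 0 < n) : OrbN n 0 := by
  refine ⟨by omega, by omega, 1, Subgroup.one_mem _, ?_⟩
  simp

lemma orb_sigma {n v : ℕ} (h : OrbN n v) : OrbN n (3 * (v % n) + v / n) := by
  obtain ⟨h0, hv, g, hg, hgx⟩ := h
  refine ⟨h0, shuffleAux.bound1 3 n ⟨v, hv⟩, stdShuffle 3 n * g,
    (shuffleH n).mul_mem (stdShuffle_mem n) hg, ?_⟩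
  rw [Equiv.Perm.mul_apply, hgx]
  rfl

lemma orb_sigma_inv {n v : ℕ} (h : OrbN n v) : OrbN n (v / 3 + v % 3 * n) := by
  obtain ⟨h0, hv, g, hg, hgx⟩ := h
  have hn : 0 < n := by omega
  have h1 : v / 3 < n := by omega
  have h2 : v % 3 * n ≤ 2 * n := Nat.mul_le_mul_right n (by omega)
  have hb : v / 3 + v % 3 * n < 3 * n := by omega
  have key : stdShuffle 3 n ⟨v / 3 + v % 3 * n, hb⟩ = ⟨v, hv⟩ := by
    apply Fin.ext
    show 3 * ((v / 3 + v % 3 * n) % n) + (v / 3 + v % 3 * n) / n = v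
    rw [Nat.add_mul_mod_self_right, Nat.mod_eq_of_lt h1,
      Nat.add_mul_div_right _ _ hn, Nat.div_eq_of_lt h1]
    omega
  refine ⟨h0, hb, (stdShuffle 3 n)⁻¹ * g,
    (shuffleH n).mul_mem ((shuffleH n).inv_mem (stdShuffle_mem n)) hg, ?_⟩
  rw [Equiv.Perm.mul_apply, hgx, ← key, Equiv.Perm.inv_def, Equiv.symm_apply_apply]

lemma orb_rho_up {n v : ℕ} (h1 : v < n) (h : OrbN n v) : OrbN n (v + n) := by
  obtain ⟨h0, hv, g, hg, hgx⟩ := h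
  have hb : v + n < 3 * n := by omega
  refine ⟨h0, hb, pilePerm 3 n (Equiv.swap 0 1) * g,
    (shuffleH n).mul_mem (pilePerm_mem n) hg, ?_⟩
  rw [Equiv.Perm.mul_apply, hgx]
  apply Fin.ext
  show v % n + (((Equiv.swap 0 1 : Equiv.Perm (Fin 3))
      ⟨v / n, shuffleAux.div_lt 3 n ⟨v, hv⟩⟩ : Fin 3) : ℕ) * n = v + n
  have hd : (⟨v / n, shuffleAux.div_lt 3 n ⟨v, hv⟩⟩ : Fin 3) = 0 := by
    apply Fin.ext
    simp [Nat.div_eq_of_lt h1]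
  rw [hd, Equiv.swap_apply_left, Nat.mod_eq_of_lt h1]
  show v + 1 * n = v + n
  rw [one_mul]

lemma orb_rho_down {n v : ℕ} (h1 : n ≤ v) (h2 : v < 2 * n) (h : OrbN n v) :
    OrbN n (v - n) := by
  obtain ⟨h0, hv, g, hg, hgx⟩ := h
  have hn : 0 < n := by omega
  have hb : v - n < 3 * n := by omega
  refine ⟨h0, hb, pilePerm 3 n (Equiv.swap 0 1) * g,
    (shuffleH n).mul_mem (pilePerm_mem n) hg, ?_⟩
  rw [Equiv.Perm.mul_apply, hgx]
  apply Fin.ext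
  show v % n + (((Equiv.swap 0 1 : Equiv.Perm (Fin 3))
      ⟨v / n, shuffleAux.div_lt 3 n ⟨v, hv⟩⟩ : Fin 3) : ℕ) * n = v - n
  have hdiv : v / n = 1 := by
    apply Nat.div_eq_of_lt_le
    · omega
    · omega
  have hd : (⟨v / n, shuffleAux.div_lt 3 n ⟨v, hv⟩⟩ : Fin 3) = 1 := by
    apply Fin.ext
    simp [hdiv]
  have hmod : v % n = v - n := by
    rw [Nat.mod_eq_sub_mod h1, Nat.mod_eq_of_lt (by omega : v - n < n)]
  rw [hd, Equiv.swap_apply_right, hmod]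
  simp

lemma m_up {n v : ℕ} (h1 : v < n) (h : OrbN n v) : OrbN n (3 * v) := by
  have h2 := orb_sigma h
  rwa [Nat.mod_eq_of_lt h1, Nat.div_eq_of_lt h1, Nat.add_zero] at h2

lemma m_down {n v : ℕ} (h : OrbN n (3 * v)) : OrbN n v := by
  have h2 := orb_sigma_inv h
  rwa [Nat.mul_div_cancel_left v (by norm_num : 0 < 3), Nat.mul_mod_right,
    Nat.zero_mul, Nat.add_zero] at h2

lemma m_up1 {n v : ℕ} (h1 : v < n) (h : OrbN n v) : OrbN n (3 * v + 1) := by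
  have hn : 0 < n := by omega
  have h2 := orb_sigma (orb_rho_up h1 h)
  rwa [Nat.add_mod_right, Nat.mod_eq_of_lt h1, Nat.add_div_right _ hn,
    Nat.div_eq_of_lt h1] at h2

lemma m_down1 {n v : ℕ} (h1 : v < n) (h : OrbN n (3 * v + 1)) : OrbN n v := by
  have h2 := orb_sigma_inv h
  have e1 : (3 * v + 1) / 3 = v := by omega
  have e2 : (3 * v + 1) % 3 = 1 := by omega
  rw [e1, e2, Nat.one_mul] at h2
  have h3 := orb_rho_down (by omega) (by omega) h2
  rwa [Nat.add_sub_cancel] at h3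

lemma pow_up {n : ℕ} : ∀ k v : ℕ, 3 ^ k * v < 3 * n → OrbN n v → OrbN n (3 ^ k * v)
  | 0, v, _, h => by simpa using h
  | (k + 1), v, hb, h => by
    have e : 3 ^ (k + 1) * v = 3 * (3 ^ k * v) := by ring
    have h1 : 3 ^ k * v ≤ 3 ^ (k + 1) * v :=
      Nat.mul_le_mul_right v (Nat.pow_le_pow_right (by norm_num) (Nat.le_succ k))
    have h2 : 3 ^ k * v < n := by omega
    have h3 := m_up h2 (pow_up k v (by omega) h)
    rwa [← e] at h3

lemma pow_down {n : ℕ} : ∀ k v : ℕ, 3 ^ k * v < 3 * n → OrbN n (3 ^ k * v) → OrbN n v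
  | 0, v, _, h => by simpa using h
  | (k + 1), v, hb, h => by
    have e : 3 ^ (k + 1) * v = 3 * (3 ^ k * v) := by ring
    have h1 : 3 ^ k * v ≤ 3 ^ (k + 1) * v :=
      Nat.mul_le_mul_right v (Nat.pow_le_pow_right (by norm_num) (Nat.le_succ k))
    rw [e] at h
    exact pow_down k v (by omega) (m_down h)

lemma kappa_up {s t n : ℕ} (hn : n = 3 ^ s * t) {j v : ℕ} (hj : j ≤ s)
    (hv : v < 3 ^ j * t) (h : OrbN n v) : OrbN n (v + 3 ^ j * t) := by
  have e1 : 3 ^ (s - j) * (3 ^ j * t) = n := by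
    rw [hn, ← mul_assoc, ← pow_add]
    congr 2
    omega
  have hp : 0 < (3 : ℕ) ^ (s - j) := Nat.pow_pos (by norm_num)
  have h2 : 3 ^ (s - j) * v < 3 ^ (s - j) * (3 ^ j * t) :=
    Nat.mul_lt_mul_of_le_of_lt (le_refl _) hv hp
  have h3 : 3 ^ (s - j) * v < n := by omega
  have h4 := orb_rho_up h3 (pow_up (s - j) v (by omega) h)
  have e2 : 3 ^ (s - j) * v + n = 3 ^ (s - j) * (v + 3 ^ j * t) := by
    rw [← e1]; ring
  rw [e2] at h4
  exact pow_down (s - j) _ (by omega) h4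

lemma kappa_down {s t n : ℕ} (hn : n = 3 ^ s * t) {j v : ℕ} (hj : j ≤ s)
    (hv : v < 3 ^ j * t) (h : OrbN n (v + 3 ^ j * t)) : OrbN n v := by
  have e1 : 3 ^ (s - j) * (3 ^ j * t) = n := by
    rw [hn, ← mul_assoc, ← pow_add]
    congr 2
    omega
  have hp : 0 < (3 : ℕ) ^ (s - j) := Nat.pow_pos (by norm_num)
  have h2 : 3 ^ (s - j) * v < 3 ^ (s - j) * (3 ^ j * t) :=
    Nat.mul_lt_mul_of_le_of_lt (le_refl _) hv hp
  have e2 : 3 ^ (s - j) * (v + 3 ^ j * t) = 3 ^ (s - j) * v + n := by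
    rw [← e1]; ring
  have h4 := pow_up (s - j) (v + 3 ^ j * t) (by omega) h
  rw [e2] at h4
  have h5 := orb_rho_down (by omega) (by omega) h4
  rw [Nat.add_sub_cancel] at h5
  exact pow_down (s - j) v (by omega) h5

lemma plus_one {n u : ℕ} (hu : u % 3 = 1) (hub : u < 3 * n) (h : OrbN n (u - 1)) :
    OrbN n u := by
  have h1 : u / 3 < n := by omega
  rw [show u - 1 = 3 * (u / 3) by omega] at h
  have h2 := m_up1 h1 (m_down h)
  rwa [show 3 * (u / 3) + 1 = u by omega] at h2

lemma minus_one {n u : ℕ} (hu : u % 3 = 1) (hub : u < 3 * n) (h : OrbN n u) :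
    OrbN n (u - 1) := by
  have h1 : u / 3 < n := by omega
  rw [show u = 3 * (u / 3) + 1 by omega] at h
  have h2 := m_up h1 (m_down1 h1 h)
  rwa [show u - 1 = 3 * (u / 3) by omega]

lemma main_orb (s t n : ℕ) (hs : 1 ≤ s) (ht : 1 < t) (h3t : ¬ 3 ∣ t)
    (hn : n = 3 ^ s * t) :
    ∀ v, v < 3 * n - 1 → (∀ i, i ≤ s → v / t / 3 ^ i % 3 ≠ 2) → OrbN n v := by
  have ht0 : 0 < t := by omega
  have h3s : 3 ≤ 3 ^ s := by
    calc (3 : ℕ) = 3 ^ 1 := by norm_num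
    _ ≤ 3 ^ s := Nat.pow_le_pow_right (by norm_num) hs
  have htn : 3 * t ≤ n := by
    rw [hn]; exact Nat.mul_le_mul_right t h3s
  have hn0 : 0 < n := by omega
  have ht3 : t % 3 ≠ 0 := fun hc => h3t (Nat.dvd_of_mod_eq_zero hc)
  intro v
  induction v using Nat.strong_induction_on with
  | _ v ih =>
    intro hvN hdig
    rcases Nat.eq_zero_or_pos v with rfl | hv1
    · exact orb_zero n hn0
    have hdig0 : ∀ w, w < t → ∀ i, i ≤ s → w / t / 3 ^ i % 3 ≠ 2 := by
      intro w hw i _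
      rw [Nat.div_eq_of_lt hw]
      simp
    have e30 : (3 : ℕ) ^ 0 * t = t := by norm_num
    by_cases hvt : v < t
    · -- small case : v < t
      have hvn : v < n := by omega
      rcases (by omega : v % 3 = 0 ∨ v % 3 = 1 ∨ v % 3 = 2) with h0 | h1 | h2
      · have hIH := ih (v / 3) (by omega) (by omega) (hdig0 _ (by omega))
        have h4 := m_up (by omega : v / 3 < n) hIH
        rwa [show 3 * (v / 3) = v by omega] at h4
      · have hIH := ih (v / 3) (by omega) (by omega) (hdig0 _ (by omega))
        have h4 := m_up1 (by omega : v / 3 < n) hIH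
        rwa [show 3 * (v / 3) + 1 = v by omega] at h4
      · rcases (by omega : t % 3 = 1 ∨ t % 3 = 2) with ht1 | ht2
        · -- t ≡ 1 (mod 3) : connect v to (v+1)/3 through v+1
          have hv1t : v + 1 < t := by omega
          have hIH := ih ((v + 1) / 3) (by omega) (by omega) (hdig0 _ (by omega))
          have hA : OrbN n (v + 1) := by
            have h4 := m_up (by omega : (v + 1) / 3 < n) hIH
            rwa [show 3 * ((v + 1) / 3) = v + 1 by omega] at h4
          have hB : OrbN n (v + 1 + t) := by
            have h4 := kappa_up hn (Nat.zero_le s)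
              (by rw [e30]; exact hv1t : v + 1 < 3 ^ 0 * t) hA
            rwa [e30] at h4
          have hC : OrbN n (v + t) := by
            have h4 := minus_one (u := v + 1 + t) (by omega) (by omega) hB
            rwa [show v + 1 + t - 1 = v + t by omega] at h4
          exact kappa_down hn (Nat.zero_le s) (by rw [e30]; exact hvt)
            (by rw [e30]; exact hC)
        · -- t ≡ 2 (mod 3) : connect v to v-1
          have hIH := ih (v - 1) (by omega) (by omega) (hdig0 _ (by omega))
          have hB : OrbN n (v - 1 + t) := by
            have h4 := kappa_up hn (Nat.zero_le s)
              (by rw [e30]; omega : v - 1 < 3 ^ 0 * t) hIH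
            rwa [e30] at h4
          have hC : OrbN n (v + t) :=
            plus_one (by omega) (by omega)
              (by rwa [show v + t - 1 = v - 1 + t by omega])
          exact kappa_down hn (Nat.zero_le s) (by rw [e30]; exact hvt)
            (by rw [e30]; exact hC)
    · -- big case : t ≤ v ; strip the leading block digit
      have hD1 : 1 ≤ v / t := (Nat.le_div_iff_mul_le ht0).mpr (by omega)
      set D := v / t with hDdef
      set j := Nat.log 3 D with hjdef
      have hj1 : 3 ^ j ≤ D := Nat.pow_log_le_self 3 (by omega)
      have hj2 : D < 3 ^ (j + 1) := Nat.lt_pow_succ_log_self (by norm_num) D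
      have hDs : D < 3 ^ (s + 1) := by
        apply (Nat.div_lt_iff_lt_mul ht0).mpr
        calc v < 3 * n := by omega
        _ = 3 ^ (s + 1) * t := by rw [hn, pow_succ]; ring
      have hjs : j ≤ s := by
        have h4 : (3 : ℕ) ^ j < 3 ^ (s + 1) := lt_of_le_of_lt hj1 hDs
        have h5 := (Nat.pow_lt_pow_iff_right (by norm_num : 1 < 3)).mp h4
        omega
      have hdj : D / 3 ^ j % 3 ≠ 2 := hdig j hjs
      have hpj : 0 < (3 : ℕ) ^ j := Nat.pow_pos (by norm_num)
      have hq1 : 1 ≤ D / 3 ^ j := (Nat.le_div_iff_mul_le hpj).mpr (by omega)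
      have hq3 : D / 3 ^ j < 3 := by
        apply (Nat.div_lt_iff_lt_mul hpj).mpr
        have hps : (3 : ℕ) ^ (j + 1) = 3 ^ j * 3 := pow_succ 3 j
        omega
      have hD2 : D < 2 * 3 ^ j := by
        have h4 : D / 3 ^ j < 2 := by omega
        have h5 := (Nat.div_lt_iff_lt_mul hpj).mp h4
        omega
      have hjt0 : 0 < 3 ^ j * t := Nat.mul_pos hpj ht0
      have hvlow : 3 ^ j * t ≤ v := by
        calc 3 ^ j * t ≤ D * t := Nat.mul_le_mul_right t hj1
        _ ≤ v := by rw [hDdef]; exact Nat.div_mul_le_self v t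
      have hvhigh : v < 2 * (3 ^ j * t) := by
        have h4 : v < 2 * 3 ^ j * t := (Nat.div_lt_iff_lt_mul ht0).mp (by omega)
        have h5 : 2 * 3 ^ j * t = 2 * (3 ^ j * t) := by ring
        omega
      have hv't : (v - 3 ^ j * t) / t = D - 3 ^ j := by
        have h4 := Nat.sub_mul_div v t (3 ^ j)
        rw [show t * 3 ^ j = 3 ^ j * t by ring] at h4
        rw [h4, hDdef]
      have hdig' : ∀ i, i ≤ s → (v - 3 ^ j * t) / t / 3 ^ i % 3 ≠ 2 := by
        intro i hi
        rw [hv't]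
        by_cases hij : j ≤ i
        · have hle : (3 : ℕ) ^ j ≤ 3 ^ i := Nat.pow_le_pow_right (by norm_num) hij
          rw [Nat.div_eq_of_lt (by omega : D - 3 ^ j < 3 ^ i)]
          simp
        · push_neg at hij
          have hpow : (3 : ℕ) ^ (j - i) * 3 ^ i = 3 ^ j := by
            rw [← pow_add]
            congr 1
            omega
          have hdd : D / 3 ^ i = (D - 3 ^ j) / 3 ^ i + 3 ^ (j - i) := by
            have h4 := Nat.add_mul_div_right (D - 3 ^ j) (3 ^ (j - i))
              (by positivity : (0 : ℕ) < 3 ^ i)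
            rw [show D - 3 ^ j + 3 ^ (j - i) * 3 ^ i = D by omega] at h4
            exact h4
          have hmul3 : (3 : ℕ) ^ (j - i) % 3 = 0 := by
            obtain ⟨m, hm⟩ : ∃ m, j - i = m + 1 := ⟨j - i - 1, by omega⟩
            rw [hm, pow_succ]
            exact Nat.mul_mod_left _ _
          have hD3 := hdig i hi
          omega
      have hIH := ih (v - 3 ^ j * t) (by omega) (by omega) hdig'
      have h4 := kappa_up hn hjs (by omega : v - 3 ^ j * t < 3 ^ j * t) hIH
      rwa [show v - 3 ^ j * t + 3 ^ j * t = v by omega] at h4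

theorem step_two (s t n : ℕ) (hs : 1 ≤ s) (ht : 1 < t) (h3t : ¬ 3 ∣ t) (hn : n = 3 ^ s * t)
    (x : Fin (3 * n)) (hx1 : t ≤ (x : ℕ)) (hx2 : (x : ℕ) < 3 * n - 1)
    (hdig : ∀ i ≤ s, digit t (x : ℕ) i ≠ 2) :
    ∃ g ∈ shuffleH n, g ⟨0, lt_of_le_of_lt (Nat.zero_le _) x.isLt⟩ = x := by
  have h := main_orb s t n hs ht h3t hn (x : ℕ) hx2
    (fun i hi => by simpa [digit] using hdig i hi)
  obtain ⟨h0, hv, g, hg, hgx⟩ := h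
  exact ⟨g, hg, hgx⟩
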